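/- Let G = (V,E) be a finite acyclic network in which every local measure satisfies μ_i(∅) > 0, let t > 0, and let x(t) be the unique solution of the cavity equation x = tΓ_G(x). Then the energy satisfies U(G;t) = (1/2) Σ_{i∈V} U_{μ_i}(x_{j→i}(t) : j ∈ ∂i) = Σ_{ij∈E} x_{j→i}(t)·x_{i→j}(t) / (t + x_{j→i}(t)·x_{i→j}(t)). -/

import Mathlib

open Finset Filter
open scoped Classical ENNReal

section LocalDefs

variable {V : Type*} [DecidableEq V]

/-- Generating polynomial `Z(w) = Σ_{S ⊆ A} ν(S) ∏_{k∈S} w_k` of a measure `ν`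
on the subsets of the ground set `A`. -/
noncomputable def lZ (A : Finset V) (ν : Finset V → ℝ) (w : V → ℝ) : ℝ :=
  ∑ S ∈ A.powerset, ν S * ∏ k ∈ S, w k

/-- Gibbs--Boltzmann probability of the event `p` under external field `w`. -/
noncomputable def lProb (A : Finset V) (ν : Finset V → ℝ) (w : V → ℝ)
    (p : Finset V → Prop) : ℝ :=
  (∑ S ∈ A.powerset.filter p, ν S * ∏ k ∈ S, w k) / lZ A ν w

/-- The energy `U_ν(w)`, i.e. the expected cardinality of the random subset. -/
noncomputable def lEnergy (A : Finset V) (ν : Finset V → ℝ) (w : V → ℝ) : ℝ :=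
  (∑ S ∈ A.powerset, (S.card : ℝ) * ν S * ∏ k ∈ S, w k) / lZ A ν w

/-- `E^w_ν[|𝓕|·1_{e∈𝓕}]`. -/
noncomputable def lEnergyIn (A : Finset V) (ν : Finset V → ℝ) (e : V) (w : V → ℝ) : ℝ :=
  (∑ S ∈ A.powerset.filter (fun S => e ∈ S), (S.card : ℝ) * ν S * ∏ k ∈ S, w k) / lZ A ν w

/-- The cavity ratio `Γ^e_ν(w') = Z^{/e}(w') / Z^{∖e}(w')`; it only depends on the
coordinates of `w` different from `e`. -/
noncomputable def lGamma (A : Finset V) (ν : Finset V → ℝ) (e : V) (w : V → ℝ) : ℝ :=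
  (∑ S ∈ (A.erase e).powerset, ν (insert e S) * ∏ k ∈ S, w k) /
  (∑ S ∈ (A.erase e).powerset, ν S * ∏ k ∈ S, w k)

/-- Rayleigh property: pairwise negative correlation under every positive external field. -/
def lRayleigh (A : Finset V) (ν : Finset V → ℝ) : Prop :=
  ∀ w : V → ℝ, (∀ k ∈ A, 0 < w k) → ∀ e ∈ A, ∀ f ∈ A, e ≠ f →
    lProb A ν w (fun S => e ∈ S ∧ f ∈ S) ≤
      lProb A ν w (fun S => e ∈ S) * lProb A ν w (fun S => f ∈ S)

/-- Size-increasing property: every ground element positively influences the total size. -/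
def lSizeInc (A : Finset V) (ν : Finset V → ℝ) : Prop :=
  ∀ w : V → ℝ, (∀ k ∈ A, 0 < w k) → ∀ e ∈ A,
    lEnergy A ν w * lProb A ν w (fun S => e ∈ S) < lEnergyIn A ν e w

/-- Cavity-monotone: nonnegative, `ν(∅) > 0`, Rayleigh and size-increasing. -/
def lCavityMonotone (A : Finset V) (ν : Finset V → ℝ) : Prop :=
  (∀ S ∈ A.powerset, 0 ≤ ν S) ∧ 0 < ν ∅ ∧ lRayleigh A ν ∧ lSizeInc A ν

end LocalDefs

section NetworkDefs

variable {V : Type*} [DecidableEq V]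

/-- The cavity operator: `(Γ_G x)_{i→j}` is the cavity ratio of the local measure `μ i`
at the edge `ij`, with external field `(x_{k→i} : k ∈ ∂i ∖ {j})`.  Local measures are
encoded as functions of the set of neighbours selected. -/
noncomputable def cavOp (G : SimpleGraph V) [G.LocallyFinite]
    (μ : V → Finset V → ℝ) (x : V → V → ℝ) (i j : V) : ℝ :=
  (∑ S ∈ ((G.neighborFinset i).erase j).powerset, μ i (insert j S) * ∏ k ∈ S, x k i) /
  (∑ S ∈ ((G.neighborFinset i).erase j).powerset, μ i S * ∏ k ∈ S, x k i)

/-- One step of the cavity iteration at activity `t` : `x ↦ t Γ_G(x)`. -/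
noncomputable def cavStep (G : SimpleGraph V) [G.LocallyFinite]
    (μ : V → Finset V → ℝ) (t : ℝ) (x : V → V → ℝ) : V → V → ℝ :=
  fun i j => t * cavOp G μ x i j

/-- The neighbours `k` of `i` such that the edge `ik` belongs to the spanning subgraph `F`;
this encodes `F ∩ E_i` as a set of neighbours. -/
noncomputable def nbrsIn (G : SimpleGraph V) [G.LocallyFinite]
    (F : Finset (Sym2 V)) (i : V) : Finset V :=
  (G.neighborFinset i).filter (fun k => s(i, k) ∈ F)

variable [Fintype V]

/-- Global measure `μ(F) = ∏_i μ_i(F ∩ E_i)` of a spanning subgraph `F`. -/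
noncomputable def gWeight (G : SimpleGraph V) [DecidableRel G.Adj]
    (μ : V → Finset V → ℝ) (F : Finset (Sym2 V)) : ℝ :=
  ∏ i : V, μ i (nbrsIn G F i)

/-- Partition function `Z(G;t) = Σ_{F ⊆ E} μ(F) t^{|F|}`. -/
noncomputable def ZG (G : SimpleGraph V) [DecidableRel G.Adj]
    (μ : V → Finset V → ℝ) (t : ℝ) : ℝ :=
  ∑ F ∈ G.edgeFinset.powerset, gWeight G μ F * t ^ F.card

/-- Gibbs--Boltzmann probability of the event `p` at activity `t`. -/
noncomputable def gProb (G : SimpleGraph V) [DecidableRel G.Adj]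
    (μ : V → Finset V → ℝ) (t : ℝ) (p : Finset (Sym2 V) → Prop) : ℝ :=
  (∑ F ∈ G.edgeFinset.powerset.filter p, gWeight G μ F * t ^ F.card) / ZG G μ t

/-- Energy `U(G;t)`, the expected size of the random spanning subgraph. -/
noncomputable def UG (G : SimpleGraph V) [DecidableRel G.Adj]
    (μ : V → Finset V → ℝ) (t : ℝ) : ℝ :=
  (∑ F ∈ G.edgeFinset.powerset, (F.card : ℝ) * gWeight G μ F * t ^ F.card) / ZG G μ t

/-- `M(G)`, the maximum size of a spanning subgraph with positive weight. -/
noncomputable def MG (G : SimpleGraph V) [DecidableRel G.Adj]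
    (μ : V → Finset V → ℝ) : ℕ :=
  (G.edgeFinset.powerset.filter (fun F => 0 < gWeight G μ F)).sup Finset.card

end NetworkDefs


section Aux
variable {V : Type*} [DecidableEq V]

private lemma acyclic_anti {G G' : SimpleGraph V} (h : G' ≤ G) (hac : G.IsAcyclic) :
    G'.IsAcyclic := fun _ c hc => hac (c.mapLe h) (hc.mapLe h)

private lemma sumPI {i : V} {A : Finset V} (hiA : i ∉ A) (g : Finset V → ℝ) (w : V → ℝ) :
    ∑ S ∈ (insert i A).powerset, g S * ∏ k ∈ S, w k
      = ∑ S ∈ A.powerset, (g S + w i * g (insert i S)) * ∏ k ∈ S, w k := by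
  rw [Finset.sum_powerset_insert hiA]
  rw [← Finset.sum_add_distrib]
  refine Finset.sum_congr rfl fun S hS => ?_
  have hiS : i ∉ S := fun h => hiA (Finset.mem_powerset.1 hS h)
  rw [Finset.prod_insert hiS]
  ring

private lemma sum_filter_mem_insert {i : V} {A : Finset V} (hiA : i ∉ A) (f : Finset V → ℝ) :
    ∑ S ∈ (insert i A).powerset.filter (fun S => i ∈ S), f S
      = ∑ S ∈ A.powerset, f (insert i S) := by
  rw [Finset.sum_filter, Finset.sum_powerset_insert hiA]
  have h1 : ∑ S ∈ A.powerset, (if i ∈ S then f S else 0) = 0 := by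
    refine Finset.sum_eq_zero fun S hS => ?_
    have : i ∉ S := fun h => hiA (Finset.mem_powerset.1 hS h)
    simp [this]
  rw [h1, zero_add]
  exact Finset.sum_congr rfl fun S hS => by simp

private lemma lZ_pos {A : Finset V} {ν : Finset V → ℝ} {w : V → ℝ}
    (hnn : ∀ S ∈ A.powerset, 0 ≤ ν S) (h0 : 0 < ν ∅) (hw : ∀ k, 0 ≤ w k) :
    0 < lZ A ν w := by
  refine Finset.sum_pos' (fun S hS => mul_nonneg (hnn S hS) (Finset.prod_nonneg fun k _ => hw k))
    ⟨∅, by simp, by simpa using h0⟩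

end Aux

section Aux2
variable {V : Type*} [Fintype V] [DecidableEq V]

private lemma prod_split {i j : V} (hij : i ≠ j) (f : V → ℝ) :
    ∏ v : V, f v = f i * (f j * ∏ v ∈ (Finset.univ.erase i).erase j, f v) := by
  rw [Finset.mul_prod_erase _ _ (Finset.mem_erase.2 ⟨hij.symm, Finset.mem_univ j⟩),
    Finset.mul_prod_erase _ _ (Finset.mem_univ i)]

private lemma gWeight_nonneg (G : SimpleGraph V) [DecidableRel G.Adj]
    {μ : V → Finset V → ℝ} (hnn : ∀ i : V, ∀ S ∈ (G.neighborFinset i).powerset, 0 ≤ μ i S)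
    (F : Finset (Sym2 V)) : 0 ≤ gWeight G μ F :=
  Finset.prod_nonneg fun v _ => hnn v _ (Finset.mem_powerset.2 (Finset.filter_subset _ _))

private lemma gWeight_empty (G : SimpleGraph V) [DecidableRel G.Adj]
    (μ : V → Finset V → ℝ) : gWeight G μ ∅ = ∏ i : V, μ i ∅ := by
  refine Finset.prod_congr rfl fun v _ => ?_
  congr 1
  simp [nbrsIn]

private lemma ZG_pos (G : SimpleGraph V) [DecidableRel G.Adj]
    {μ : V → Finset V → ℝ} (hnn : ∀ i : V, ∀ S ∈ (G.neighborFinset i).powerset, 0 ≤ μ i S)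
    (h0 : ∀ i : V, 0 < μ i ∅) {t : ℝ} (ht : 0 < t) : 0 < ZG G μ t := by
  refine Finset.sum_pos' (fun F hF => mul_nonneg (gWeight_nonneg G hnn F) (pow_nonneg ht.le _))
    ⟨∅, by simp, ?_⟩
  simp only [Finset.card_empty, pow_zero, mul_one, gWeight_empty]
  exact Finset.prod_pos fun i _ => h0 i

end Aux2
section Leaf
variable {V : Type*} [Fintype V] [DecidableEq V]

private lemma exists_leaf (G : SimpleGraph V) [DecidableRel G.Adj] (hac : G.IsAcyclic)
    {u v : V} (huv : G.Adj u v) :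
    ∃ i j : V, G.Adj i j ∧ G.neighborFinset i = {j} := by
  classical
  set P : ℕ → Prop := fun n => ∃ (a b : V) (p : G.Walk a b), p.IsPath ∧ p.length = n with hPdef
  have hbound : ∀ n, P n → n ≤ Fintype.card V := by
    rintro n ⟨a, b, p, hp, rfl⟩
    exact hp.length_lt.le
  have hP1 : P 1 := by
    refine ⟨u, v, SimpleGraph.Walk.cons huv SimpleGraph.Walk.nil, ?_, rfl⟩
    simp [SimpleGraph.Walk.cons_isPath_iff, huv.ne]
  have hcard : 1 ≤ Fintype.card V := hbound 1 hP1
  set N := Nat.findGreatest P (Fintype.card V) with hNdef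
  have hPN : P N := Nat.findGreatest_spec hcard hP1
  have hmax : ∀ m, N < m → ¬ P m := fun m hm hPm =>
    Nat.findGreatest_is_greatest hm (hbound m hPm) hPm
  have hN1 : 1 ≤ N := Nat.le_findGreatest hcard hP1
  obtain ⟨a, b, p, hp, hlen⟩ := hPN
  cases p with
  | nil => simp at hlen; omega
  | @cons _ c _ h q =>
    have hclaim : ∀ k, G.Adj a k → k = c := by
      intro k hk
      by_cases hks : k ∈ (SimpleGraph.Walk.cons h q).support
      · have hq2 : ((SimpleGraph.Walk.cons h q).takeUntil k hks).IsPath := hp.takeUntil hks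
        have hcyc := hac (SimpleGraph.Walk.cons hk.symm
          ((SimpleGraph.Walk.cons h q).takeUntil k hks))
        rw [SimpleGraph.Walk.cons_isCycle_iff] at hcyc
        have hedge : s(k, a) ∈ ((SimpleGraph.Walk.cons h q).takeUntil k hks).edges := by
          by_contra hne
          exact hcyc ⟨hq2, hne⟩
        have hsub := SimpleGraph.Walk.edges_takeUntil_subset (SimpleGraph.Walk.cons h q) hks hedge
        rw [SimpleGraph.Walk.edges_cons] at hsub
        rcases List.mem_cons.1 hsub with heq | hmem
        · rw [Sym2.eq_iff] at heq
          rcases heq with ⟨h1, h2⟩ | ⟨h1, h2⟩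
          · exact absurd h1 hk.ne'
          · exact h1
        · exfalso
          have ha : a ∈ q.support := SimpleGraph.Walk.snd_mem_support_of_mem_edges q hmem
          rw [SimpleGraph.Walk.cons_isPath_iff] at hp
          exact hp.2 ha
      · exfalso
        refine hmax (N + 1) (Nat.lt_succ_self N) ⟨k, b,
          SimpleGraph.Walk.cons hk.symm (SimpleGraph.Walk.cons h q), ?_, ?_⟩
        · rw [SimpleGraph.Walk.cons_isPath_iff]
          exact ⟨hp, hks⟩
        · simp [SimpleGraph.Walk.length_cons, hlen]
    refine ⟨a, c, h, ?_⟩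
    ext k
    simp only [SimpleGraph.mem_neighborFinset, Finset.mem_singleton]
    exact ⟨hclaim k, fun hk => hk ▸ h⟩

end Leaf
section Hand
variable {V : Type*} [Fintype V] [DecidableEq V]

private lemma handshake (G : SimpleGraph V) [DecidableRel G.Adj] {F : Finset (Sym2 V)}
    (hF : F ⊆ G.edgeFinset) : ∑ r : V, (nbrsIn G F r).card = 2 * F.card := by
  classical
  have h1 : ∀ r : V, (nbrsIn G F r).card = (F.filter (fun e => r ∈ e)).card := by
    intro r
    refine Finset.card_bij (fun k _ => s(r, k)) ?_ ?_ ?_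
    · intro k hk
      rw [nbrsIn, Finset.mem_filter] at hk
      exact Finset.mem_filter.2 ⟨hk.2, Sym2.mem_mk_left r k⟩
    · intro k hk k' hk' hkk'
      exact Sym2.congr_right.1 hkk'
    · intro e he
      rw [Finset.mem_filter] at he
      obtain ⟨heF, hre⟩ := he
      refine ⟨Sym2.Mem.other hre, ?_, Sym2.other_spec hre⟩
      rw [nbrsIn, Finset.mem_filter, SimpleGraph.mem_neighborFinset]
      constructor
      · have : s(r, Sym2.Mem.other hre) ∈ G.edgeSet := by
          rw [Sym2.other_spec hre]
          exact SimpleGraph.mem_edgeFinset.1 (hF heF)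
        exact this
      · rw [Sym2.other_spec hre]; exact heF
  have h2 : ∀ e ∈ F, (Finset.univ.filter (fun r : V => r ∈ e)).card = 2 := by
    intro e he
    have hnd : ¬ e.IsDiag := G.not_isDiag_of_mem_edgeSet (SimpleGraph.mem_edgeFinset.1 (hF he))
    revert hnd
    induction e using Sym2.ind with
    | _ a b =>
      intro hnd
      have hab : a ≠ b := by simpa using hnd
      have : Finset.univ.filter (fun r : V => r ∈ s(a, b)) = {a, b} := by
        ext r; simp [Sym2.mem_iff]
      rw [this, Finset.card_insert_of_notMem (by simp [hab]), Finset.card_singleton]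
  calc ∑ r : V, (nbrsIn G F r).card = ∑ r : V, (F.filter (fun e => r ∈ e)).card := by
        simp only [h1]
    _ = ∑ r : V, ∑ e ∈ F, if r ∈ e then 1 else 0 := by
        simp only [Finset.card_filter]
    _ = ∑ e ∈ F, ∑ r : V, if r ∈ e then 1 else 0 := Finset.sum_comm
    _ = ∑ e ∈ F, 2 := Finset.sum_congr rfl fun e he => by
        rw [← Finset.card_filter]; exact h2 e he
    _ = 2 * F.card := by rw [Finset.sum_const, smul_eq_mul, mul_comm]

private noncomputable def NumV (G : SimpleGraph V) [DecidableRel G.Adj]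
    (μ : V → Finset V → ℝ) (t : ℝ) (r : V) (S : Finset V) : ℝ :=
  ∑ F ∈ G.edgeFinset.powerset.filter (fun F => nbrsIn G F r = S), gWeight G μ F * t ^ F.card

private noncomputable def NumE (G : SimpleGraph V) [DecidableRel G.Adj]
    (μ : V → Finset V → ℝ) (t : ℝ) (e : Sym2 V) : ℝ :=
  ∑ F ∈ G.edgeFinset.powerset.filter (fun F => e ∈ F), gWeight G μ F * t ^ F.card

end Hand
section Main
variable {V : Type*} [Fintype V] [DecidableEq V]

private lemma main_empty (G : SimpleGraph V) [DecidableRel G.Adj]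
    (he : G.edgeFinset = ∅) (μ : V → Finset V → ℝ) (t : ℝ) (x : V → V → ℝ) :
    (∀ r S, S ⊆ G.neighborFinset r →
        NumV G μ t r S * lZ (G.neighborFinset r) (μ r) (fun k => x k r)
          = μ r S * (∏ k ∈ S, x k r) * ZG G μ t) ∧
    (∀ a b, G.Adj a b → NumE G μ t s(a, b) * (t + x b a * x a b)
          = x b a * x a b * ZG G μ t) := by
  have hN : ∀ r, G.neighborFinset r = ∅ := by
    intro r; ext k
    simp only [SimpleGraph.mem_neighborFinset, Finset.notMem_empty, iff_false]
    intro h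
    have h2 : s(r, k) ∈ G.edgeFinset := SimpleGraph.mem_edgeFinset.2 h
    rw [he] at h2
    exact Finset.notMem_empty _ h2
  constructor
  · intro r S hS
    rw [hN r] at hS
    rw [Finset.subset_empty.1 hS]
    have hnb : nbrsIn G (∅ : Finset (Sym2 V)) r = ∅ := by simp [nbrsIn]
    rw [NumV, ZG, lZ, hN r, he]
    simp [hnb, Finset.filter_singleton]
    ring
  · intro a b hab
    have h2 : s(a, b) ∈ G.edgeFinset := SimpleGraph.mem_edgeFinset.2 hab
    rw [he] at h2
    exact absurd h2 (Finset.notMem_empty _)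

end Main
section MainInd
variable {V : Type*} [Fintype V] [DecidableEq V]

private lemma main_ind (n : ℕ) :
    ∀ (G : SimpleGraph V) [DecidableRel G.Adj],
      G.edgeFinset.card ≤ n → G.IsAcyclic →
      ∀ (μ : V → Finset V → ℝ),
      (∀ i S, S ∈ (G.neighborFinset i).powerset → 0 ≤ μ i S) →
      (∀ i, 0 < μ i ∅) →
      ∀ (t : ℝ), 0 < t →
      ∀ (x : V → V → ℝ), (∀ a b, 0 ≤ x a b) →
      (∀ a b, G.Adj a b → x a b = t * cavOp G μ x a b) →
      ((∀ r S, S ⊆ G.neighborFinset r →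
          NumV G μ t r S * lZ (G.neighborFinset r) (μ r) (fun k => x k r)
            = μ r S * (∏ k ∈ S, x k r) * ZG G μ t) ∧
       (∀ a b, G.Adj a b → NumE G μ t s(a, b) * (t + x b a * x a b)
            = x b a * x a b * ZG G μ t)) := by
  induction n with
  | zero =>
    intro G _ hcard _ μ _ _ t _ x _ _
    exact main_empty G (Finset.card_eq_zero.1 (Nat.le_zero.1 hcard)) μ t x
  | succ n IH =>
    intro G instG hcard hac μ hnn h0 t ht x hxnn hx
    rcases Finset.eq_empty_or_nonempty G.edgeFinset with he | ⟨e0, he0⟩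
    · exact main_empty G he μ t x
    · have hadj : ∃ u v : V, G.Adj u v := by
        revert he0
        induction e0 using Sym2.ind with
        | _ u v => exact fun h => ⟨u, v, SimpleGraph.mem_edgeFinset.1 h⟩
      obtain ⟨u0, v0, huv⟩ := hadj
      obtain ⟨i, j, hij, hNi⟩ := exists_leaf G hac huv
      clear huv u0 v0 he0 e0
      have hij' : i ≠ j := hij.ne
      have hiNj : i ∈ G.neighborFinset j := by
        rw [SimpleGraph.mem_neighborFinset]; exact hij.symm
      set e : Sym2 V := s(i, j) with hedef
      have heE : e ∈ G.edgeFinset := SimpleGraph.mem_edgeFinset.2 hij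
      set G' : SimpleGraph V := G.deleteEdges {e} with hG'def
      haveI instG' : DecidableRel G'.Adj := fun a b => Classical.dec _
      have hAdj' : ∀ a b, G'.Adj a b ↔ G.Adj a b ∧ s(a, b) ≠ e := by
        intro a b
        rw [hG'def, SimpleGraph.deleteEdges_adj]
        simp
      have hE' : G'.edgeFinset = G.edgeFinset.erase e := by
        ext e'
        rw [SimpleGraph.mem_edgeFinset, hG'def, SimpleGraph.edgeSet_deleteEdges,
          Finset.mem_erase]
        simp only [Set.mem_diff, Set.mem_singleton_iff, SimpleGraph.mem_edgeFinset]
        tauto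
      have heE' : e ∉ G'.edgeFinset := by rw [hE']; exact Finset.notMem_erase _ _
      have hcard' : G'.edgeFinset.card ≤ n := by
        rw [hE', Finset.card_erase_of_mem heE]
        omega
      have hac' : G'.IsAcyclic := acyclic_anti (SimpleGraph.deleteEdges_le _) hac
      have hNi' : G'.neighborFinset i = ∅ := by
        ext k
        simp only [SimpleGraph.mem_neighborFinset, Finset.notMem_empty, iff_false, hAdj']
        rintro ⟨hik, hne⟩
        have hkj : k ∈ G.neighborFinset i := by
          rw [SimpleGraph.mem_neighborFinset]; exact hik
        rw [hNi, Finset.mem_singleton] at hkj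
        exact hne (by rw [hkj])
      have hNj' : G'.neighborFinset j = (G.neighborFinset j).erase i := by
        ext k
        simp only [SimpleGraph.mem_neighborFinset, Finset.mem_erase,
          SimpleGraph.mem_neighborFinset, hAdj']
        constructor
        · rintro ⟨hjk, hne⟩
          refine ⟨fun hki => hne ?_, hjk⟩
          rw [hki] at hjk ⊢
          rw [hedef]
          exact Sym2.eq_swap
        · rintro ⟨hki, hjk⟩
          refine ⟨hjk, fun hkeq => ?_⟩
          rw [hedef, Sym2.eq_iff] at hkeq
          rcases hkeq with ⟨h1, h2⟩ | ⟨h1, h2⟩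
          · exact hij' (h1 ▸ h2 ▸ rfl)
          · exact hki h2
      have hNr' : ∀ r, r ≠ i → r ≠ j → G'.neighborFinset r = G.neighborFinset r := by
        intro r hri hrj
        ext k
        simp only [SimpleGraph.mem_neighborFinset, hAdj']
        constructor
        · exact fun h => h.1
        · intro h
          refine ⟨h, fun hkeq => ?_⟩
          rw [hedef, Sym2.eq_iff] at hkeq
          rcases hkeq with ⟨h1, _⟩ | ⟨h1, _⟩
          · exact hri h1
          · exact hrj h1
      -- the modified local measure at j
      set ν : V → Finset V → ℝ :=
        fun v => if v = j then (fun S => μ j S + x i j * μ j (insert i S)) else μ v with hνdef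
      have hνj : ∀ S, ν j S = μ j S + x i j * μ j (insert i S) := fun S => by
        rw [hνdef]; simp
      have hνv : ∀ v, v ≠ j → ν v = μ v := fun v hv => by
        rw [hνdef]; simp [hv]
      -- the leaf cavity relation
      have hx3 : t * μ i {j} = x i j * μ i ∅ := by
        have h1 := hx i j hij
        rw [cavOp, hNi, Finset.erase_singleton, Finset.powerset_empty] at h1
        simp only [Finset.sum_singleton, Finset.prod_empty, mul_one, insert_empty_eq] at h1
        rw [h1]
        have hμ : μ i ∅ ≠ 0 := (h0 i).ne'
        field_simp
      -- nbrsIn bookkeeping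
      have hnb1 : ∀ (F : Finset (Sym2 V)), e ∉ F → ∀ r, nbrsIn G F r = nbrsIn G' F r := by
        intro F heF r
        ext k
        simp only [nbrsIn, Finset.mem_filter, SimpleGraph.mem_neighborFinset, hAdj']
        constructor
        · rintro ⟨h1, h2⟩
          exact ⟨⟨h1, fun hk => heF (hk ▸ h2)⟩, h2⟩
        · tauto
      have hnbFi : ∀ (F : Finset (Sym2 V)), e ∉ F → nbrsIn G F i = ∅ := by
        intro F heF
        ext k
        simp only [nbrsIn, Finset.mem_filter, Finset.notMem_empty, iff_false, not_and, hNi,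
          Finset.mem_singleton]
        rintro rfl
        exact heF
      have hnbG'i : ∀ (F : Finset (Sym2 V)), nbrsIn G' F i = ∅ := by
        intro F
        simp [nbrsIn, hNi']
      have hnb2 : ∀ (F : Finset (Sym2 V)), nbrsIn G (insert e F) i = {j} := by
        intro F
        ext k
        simp only [nbrsIn, Finset.mem_filter, hNi, Finset.mem_singleton]
        constructor
        · exact fun h => h.1
        · rintro rfl
          exact ⟨rfl, Finset.mem_insert_self _ _⟩
      have hnb3 : ∀ (F : Finset (Sym2 V)), e ∉ F →
          nbrsIn G (insert e F) j = insert i (nbrsIn G' F j) := by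
        intro F heF
        ext k
        simp only [nbrsIn, Finset.mem_filter, Finset.mem_insert, SimpleGraph.mem_neighborFinset,
          hAdj']
        constructor
        · rintro ⟨hjk, hk | hk⟩
          · left
            rw [hedef, Sym2.eq_iff] at hk
            rcases hk with ⟨h1, _⟩ | ⟨_, h2⟩
            · exact absurd h1 (fun hq => hij' hq.symm)
            · exact h2
          · right
            exact ⟨⟨hjk, fun hq => heF (hq ▸ hk)⟩, hk⟩
        · rintro (rfl | ⟨⟨hjk, hne⟩, hk⟩)
          · exact ⟨hij.symm, Or.inl (by rw [hedef]; exact Sym2.eq_swap)⟩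
          · exact ⟨hjk, Or.inr hk⟩
      have hnb4 : ∀ (F : Finset (Sym2 V)), e ∉ F → ∀ r, r ≠ i → r ≠ j →
          nbrsIn G (insert e F) r = nbrsIn G' F r := by
        intro F heF r hri hrj
        ext k
        simp only [nbrsIn, Finset.mem_filter, Finset.mem_insert, SimpleGraph.mem_neighborFinset,
          hAdj']
        constructor
        · rintro ⟨hrk, hk | hk⟩
          · exfalso
            rw [hedef, Sym2.eq_iff] at hk
            rcases hk with ⟨h1, _⟩ | ⟨h1, _⟩
            · exact hri h1
            · exact hrj h1
          · exact ⟨⟨hrk, fun hq => heF (hq ▸ hk)⟩, hk⟩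
        · rintro ⟨⟨hrk, _⟩, hk⟩
          exact ⟨hrk, Or.inr hk⟩
      have hnb5 : ∀ (F : Finset (Sym2 V)), i ∉ nbrsIn G' F j := by
        intro F hmem
        rw [nbrsIn, Finset.mem_filter, hNj'] at hmem
        exact absurd hmem.1 (fun h => (Finset.mem_erase.1 h).1 rfl)
      -- weight expansions
      have hwG : ∀ (F : Finset (Sym2 V)), e ∉ F →
          gWeight G μ F = μ i ∅ * (μ j (nbrsIn G' F j) *
            ∏ v ∈ (Finset.univ.erase i).erase j, μ v (nbrsIn G' F v)) := by
        intro F heF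
        rw [gWeight, prod_split hij' (fun v => μ v (nbrsIn G F v)), hnbFi F heF,
          hnb1 F heF j]
        congr 1
        congr 1
        refine Finset.prod_congr rfl fun v hv => ?_
        rw [hnb1 F heF v]
      have hwGe : ∀ (F : Finset (Sym2 V)), e ∉ F →
          gWeight G μ (insert e F) = μ i {j} * (μ j (insert i (nbrsIn G' F j)) *
            ∏ v ∈ (Finset.univ.erase i).erase j, μ v (nbrsIn G' F v)) := by
        intro F heF
        rw [gWeight, prod_split hij' (fun v => μ v (nbrsIn G (insert e F) v)), hnb2 F,
          hnb3 F heF]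
        congr 1
        congr 1
        refine Finset.prod_congr rfl fun v hv => ?_
        rw [Finset.mem_erase] at hv
        rw [hnb4 F heF v (Finset.mem_erase.1 hv.2).1 hv.1]
      have hwG' : ∀ (F : Finset (Sym2 V)),
          gWeight G' ν F = μ i ∅ * ((μ j (nbrsIn G' F j) +
              x i j * μ j (insert i (nbrsIn G' F j))) *
            ∏ v ∈ (Finset.univ.erase i).erase j, μ v (nbrsIn G' F v)) := by
        intro F
        rw [gWeight, prod_split hij' (fun v => ν v (nbrsIn G' F v)), hnbG'i F,
          hνv i hij', hνj _]
        congr 1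
        congr 1
        refine Finset.prod_congr rfl fun v hv => ?_
        rw [Finset.mem_erase] at hv
        rw [hνv v hv.1]
      -- the key weight combination
      have hw : ∀ F ∈ G'.edgeFinset.powerset,
          gWeight G μ F * t ^ F.card + gWeight G μ (insert e F) * t ^ (insert e F).card
            = gWeight G' ν F * t ^ F.card := by
        intro F hF
        have heF : e ∉ F := fun h => heE' (Finset.mem_powerset.1 hF h)
        rw [Finset.card_insert_of_notMem heF, hwG F heF, hwGe F heF, hwG' F, pow_succ]
        linear_combination (μ j (insert i (nbrsIn G' F j)) *
          (∏ v ∈ (Finset.univ.erase i).erase j, μ v (nbrsIn G' F v)) * t ^ F.card) * hx3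
      have hEG : G.edgeFinset = insert e G'.edgeFinset := by
        rw [hE', Finset.insert_erase heE]
      have hZsplit : ∀ f : Finset (Sym2 V) → ℝ,
          ∑ F ∈ G.edgeFinset.powerset, f F
            = ∑ F ∈ G'.edgeFinset.powerset, (f F + f (insert e F)) := by
        intro f
        rw [hEG, Finset.sum_powerset_insert heE', Finset.sum_add_distrib]
      have hZG : ZG G μ t = ZG G' ν t := by
        rw [ZG, ZG, hZsplit]
        exact Finset.sum_congr rfl hw
      -- the cavity solution restricts to G'
      have hx' : ∀ a b, G'.Adj a b → x a b = t * cavOp G' ν x a b := by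
        intro a b hab
        obtain ⟨habG, hne⟩ := (hAdj' a b).1 hab
        rw [hx a b habG]
        congr 1
        by_cases haj : a = j
        · rw [haj] at hab habG hne ⊢
          have hbi : b ≠ i := by
            rintro rfl
            exact hne (by rw [hedef]; exact Sym2.eq_swap)
          have hiA : i ∉ (G'.neighborFinset j).erase b := by
            rw [hNj']
            intro hmem
            rw [Finset.mem_erase, Finset.mem_erase] at hmem
            exact hmem.2.1 rfl
          have hA : (G.neighborFinset j).erase b = insert i ((G'.neighborFinset j).erase b) := by
            rw [hNj']
            ext k
            simp only [Finset.mem_erase, Finset.mem_insert]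
            constructor
            · rintro ⟨hkb, hkN⟩
              by_cases hki : k = i
              · exact Or.inl hki
              · exact Or.inr ⟨hkb, hki, hkN⟩
            · rintro (rfl | ⟨hkb, _, hkN⟩)
              · exact ⟨fun h => hbi h.symm, hiNj⟩
              · exact ⟨hkb, hkN⟩
          rw [cavOp, cavOp, hA, sumPI hiA (fun S => μ j (insert b S)) (fun k => x k j),
            sumPI hiA (μ j) (fun k => x k j)]
          congr 1
          · refine Finset.sum_congr rfl fun S hS => ?_
            rw [hνj (insert b S), Finset.insert_comm i b S]
          · refine Finset.sum_congr rfl fun S hS => ?_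
            rw [hνj S]
        · have hai : a ≠ i := by
            intro h
            have hb : b ∈ G'.neighborFinset i := by
              rw [SimpleGraph.mem_neighborFinset, ← h]; exact hab
            rw [hNi'] at hb
            exact absurd hb (Finset.notMem_empty _)
          rw [cavOp, cavOp, hNr' a hai haj, hνv a haj]
      have hZj : lZ (G.neighborFinset j) (μ j) (fun k => x k j)
          = lZ (G'.neighborFinset j) (ν j) (fun k => x k j) := by
        have hiA : i ∉ (G.neighborFinset j).erase i := Finset.notMem_erase _ _
        rw [lZ, lZ, show G.neighborFinset j = insert i ((G.neighborFinset j).erase i) from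
          (Finset.insert_erase hiNj).symm, sumPI hiA (μ j) (fun k => x k j), hNj']
        refine Finset.sum_congr rfl fun S hS => ?_
        rw [hνj]
      have hsubN : ∀ v, G'.neighborFinset v ⊆ G.neighborFinset v := by
        intro v k hk
        rw [SimpleGraph.mem_neighborFinset] at hk ⊢
        exact ((hAdj' v k).1 hk).1
      have hnn' : ∀ v S, S ∈ (G'.neighborFinset v).powerset → 0 ≤ ν v S := by
        intro v S hS
        rw [Finset.mem_powerset] at hS
        by_cases hvj : v = j
        · rw [hvj] at hS ⊢
          rw [hνj]
          have hS1 : S ⊆ G.neighborFinset j := hS.trans (hsubN j)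
          have hS2 : insert i S ⊆ G.neighborFinset j := Finset.insert_subset hiNj hS1
          exact add_nonneg (hnn j S (Finset.mem_powerset.2 hS1))
            (mul_nonneg (hxnn i j) (hnn j _ (Finset.mem_powerset.2 hS2)))
        · rw [hνv v hvj]
          exact hnn v S (Finset.mem_powerset.2 (hS.trans (hsubN v)))
      have h0' : ∀ v, 0 < ν v ∅ := by
        intro v
        by_cases hvj : v = j
        · rw [hvj, hνj]
          exact add_pos_of_pos_of_nonneg (h0 j) (mul_nonneg (hxnn i j)
            (hnn j _ (Finset.mem_powerset.2
              (Finset.insert_subset hiNj (Finset.empty_subset _)))))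
        · rw [hνv v hvj]; exact h0 v
      obtain ⟨IH1, IH2⟩ := IH G' hcard' hac' ν hnn' h0' t ht x hxnn hx'
      -- the marginal identity at the vertex j
      have hIj : ∀ S, S ⊆ G.neighborFinset j →
          NumV G μ t j S * lZ (G.neighborFinset j) (μ j) (fun k => x k j)
            = μ j S * (∏ k ∈ S, x k j) * ZG G μ t := by
        intro S hS
        by_cases hiS : i ∈ S
        · have hS'sub : S.erase i ⊆ G'.neighborFinset j := by
            rw [hNj']; exact Finset.erase_subset_erase _ hS
          have hiS' : i ∉ S.erase i := Finset.notMem_erase _ _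
          have hSins : insert i (S.erase i) = S := Finset.insert_erase hiS
          have hred : NumV G μ t j S = ∑ F ∈ G'.edgeFinset.powerset,
              (if nbrsIn G' F j = S.erase i
               then x i j * (μ i ∅ * (μ j S *
                 ∏ v ∈ (Finset.univ.erase i).erase j, μ v (nbrsIn G' F v))) * t ^ F.card
               else 0) := by
            rw [NumV, Finset.sum_filter, hZsplit]
            refine Finset.sum_congr rfl fun F hF => ?_
            have heF : e ∉ F := fun h => heE' (Finset.mem_powerset.1 hF h)
            rw [hnb1 F heF j, hnb3 F heF]
            have hc1 : ¬ (nbrsIn G' F j = S) := fun h => hnb5 F (by rw [h]; exact hiS)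
            rw [if_neg hc1, zero_add]
            by_cases hc2 : nbrsIn G' F j = S.erase i
            · rw [if_pos (by rw [hc2, hSins]), if_pos hc2, hwGe F heF,
                Finset.card_insert_of_notMem heF, pow_succ, hc2, hSins]
              linear_combination (μ j S *
                (∏ v ∈ (Finset.univ.erase i).erase j, μ v (nbrsIn G' F v)) * t ^ F.card) * hx3
            · rw [if_neg (fun h => hc2 (by rw [← h, Finset.erase_insert (hnb5 F)])),
                if_neg hc2]
          have hkey : NumV G μ t j S * ν j (S.erase i)
              = NumV G' ν t j (S.erase i) * (x i j * μ j S) := by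
            rw [hred, NumV, Finset.sum_filter, Finset.sum_mul, Finset.sum_mul]
            refine Finset.sum_congr rfl fun F hF => ?_
            by_cases hc : nbrsIn G' F j = S.erase i
            · rw [if_pos hc, if_pos hc, hwG' F, hc, hνj (S.erase i), hSins]
              ring
            · rw [if_neg hc, if_neg hc, zero_mul, zero_mul]
          have hprod : x i j * ∏ k ∈ S.erase i, x k j = ∏ k ∈ S, x k j := by
            rw [show (∏ k ∈ S, x k j) = ∏ k ∈ insert i (S.erase i), x k j from by rw [hSins],
              Finset.prod_insert hiS']
          rcases eq_or_lt_of_le (hnn' j (S.erase i) (Finset.mem_powerset.2 hS'sub))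
            with hν0 | hνpos
          · have h1 : 0 ≤ μ j (S.erase i) :=
              hnn j _ (Finset.mem_powerset.2 ((Finset.erase_subset _ _).trans hS))
            have h2 : 0 ≤ x i j * μ j S :=
              mul_nonneg (hxnn i j) (hnn j S (Finset.mem_powerset.2 hS))
            have h3 : x i j * μ j S = 0 := by
              have h4 := hνj (S.erase i)
              rw [hSins, ← hν0] at h4
              linarith
            have h4 : NumV G μ t j S = 0 := by
              rw [hred]
              refine Finset.sum_eq_zero fun F hF => ?_
              by_cases hc : nbrsIn G' F j = S.erase i
              · rw [if_pos hc]
                linear_combination (μ i ∅ *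
                  (∏ v ∈ (Finset.univ.erase i).erase j, μ v (nbrsIn G' F v)) *
                    t ^ F.card) * h3
              · exact if_neg hc
            rw [h4, zero_mul, ← hprod]
            linear_combination (-(∏ k ∈ S.erase i, x k j) * ZG G μ t) * h3
          · refine mul_right_cancel₀ hνpos.ne' ?_
            calc NumV G μ t j S * lZ (G.neighborFinset j) (μ j) (fun k => x k j) *
                  ν j (S.erase i)
                = (NumV G μ t j S * ν j (S.erase i)) *
                    lZ (G.neighborFinset j) (μ j) (fun k => x k j) := by ring
              _ = (NumV G' ν t j (S.erase i) * (x i j * μ j S)) *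
                    lZ (G.neighborFinset j) (μ j) (fun k => x k j) := by rw [hkey]
              _ = (x i j * μ j S) * (NumV G' ν t j (S.erase i) *
                    lZ (G'.neighborFinset j) (ν j) (fun k => x k j)) := by rw [← hZj]; ring
              _ = (x i j * μ j S) * (ν j (S.erase i) * (∏ k ∈ S.erase i, x k j) *
                    ZG G' ν t) := by rw [IH1 j (S.erase i) hS'sub]
              _ = μ j S * (∏ k ∈ S, x k j) * ZG G μ t * ν j (S.erase i) := by
                    rw [hZG, ← hprod]; ring
        · have hSsub' : S ⊆ G'.neighborFinset j := by
            rw [hNj']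
            exact fun k hk => Finset.mem_erase.2 ⟨fun h => hiS (h ▸ hk), hS hk⟩
          have hred : NumV G μ t j S = ∑ F ∈ G'.edgeFinset.powerset,
              (if nbrsIn G' F j = S
               then μ i ∅ * (μ j S *
                 ∏ v ∈ (Finset.univ.erase i).erase j, μ v (nbrsIn G' F v)) * t ^ F.card
               else 0) := by
            rw [NumV, Finset.sum_filter, hZsplit]
            refine Finset.sum_congr rfl fun F hF => ?_
            have heF : e ∉ F := fun h => heE' (Finset.mem_powerset.1 hF h)
            rw [hnb1 F heF j, hnb3 F heF]
            have hc2 : ¬ (insert i (nbrsIn G' F j) = S) :=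
              fun h => hiS (h ▸ Finset.mem_insert_self i _)
            rw [if_neg hc2, add_zero]
            by_cases hc : nbrsIn G' F j = S
            · rw [if_pos hc, if_pos hc, hwG F heF, hc]
            · rw [if_neg hc, if_neg hc]
          have hkey : NumV G μ t j S * ν j S = NumV G' ν t j S * μ j S := by
            rw [hred, NumV, Finset.sum_filter, Finset.sum_mul, Finset.sum_mul]
            refine Finset.sum_congr rfl fun F hF => ?_
            by_cases hc : nbrsIn G' F j = S
            · rw [if_pos hc, if_pos hc, hwG' F, hc, hνj S]
              ring
            · rw [if_neg hc, if_neg hc, zero_mul, zero_mul]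
          rcases eq_or_lt_of_le (hnn' j S (Finset.mem_powerset.2 hSsub')) with hν0 | hνpos
          · have h1 : 0 ≤ x i j * μ j (insert i S) := mul_nonneg (hxnn i j)
              (hnn j _ (Finset.mem_powerset.2 (Finset.insert_subset hiNj hS)))
            have h2 : 0 ≤ μ j S := hnn j S (Finset.mem_powerset.2 hS)
            have h3 : μ j S = 0 := by
              have h4 := hνj S
              rw [← hν0] at h4
              linarith
            have h4 : NumV G μ t j S = 0 := by
              rw [hred]
              refine Finset.sum_eq_zero fun F hF => ?_
              by_cases hc : nbrsIn G' F j = S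
              · rw [if_pos hc, h3]
                ring
              · exact if_neg hc
            rw [h4, h3, zero_mul]
            ring
          · refine mul_right_cancel₀ hνpos.ne' ?_
            calc NumV G μ t j S * lZ (G.neighborFinset j) (μ j) (fun k => x k j) * ν j S
                = (NumV G μ t j S * ν j S) *
                    lZ (G.neighborFinset j) (μ j) (fun k => x k j) := by ring
              _ = (NumV G' ν t j S * μ j S) *
                    lZ (G.neighborFinset j) (μ j) (fun k => x k j) := by rw [hkey]
              _ = μ j S * (NumV G' ν t j S *
                    lZ (G'.neighborFinset j) (ν j) (fun k => x k j)) := by rw [← hZj]; ring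
              _ = μ j S * (ν j S * (∏ k ∈ S, x k j) * ZG G' ν t) := by
                    rw [IH1 j S hSsub']
              _ = μ j S * (∏ k ∈ S, x k j) * ZG G μ t * ν j S := by rw [hZG]; ring
      -- the marginal identity at vertices other than i, j
      have hIr : ∀ r, r ≠ i → r ≠ j → ∀ S, S ⊆ G.neighborFinset r →
          NumV G μ t r S * lZ (G.neighborFinset r) (μ r) (fun k => x k r)
            = μ r S * (∏ k ∈ S, x k r) * ZG G μ t := by
        intro r hri hrj S hS
        have htrans : NumV G μ t r S = NumV G' ν t r S := by
          rw [NumV, NumV, Finset.sum_filter, Finset.sum_filter, hZsplit]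
          refine Finset.sum_congr rfl fun F hF => ?_
          have heF : e ∉ F := fun h => heE' (Finset.mem_powerset.1 hF h)
          rw [hnb1 F heF r, hnb4 F heF r hri hrj]
          by_cases hc : nbrsIn G' F r = S
          · rw [if_pos hc, if_pos hc, if_pos hc]
            exact hw F hF
          · rw [if_neg hc, if_neg hc, if_neg hc, add_zero]
        rw [htrans, show lZ (G.neighborFinset r) (μ r) (fun k => x k r)
              = lZ (G'.neighborFinset r) (ν r) (fun k => x k r) from by
                rw [hNr' r hri hrj, hνv r hrj],
          show μ r S = ν r S from by rw [hνv r hrj], hZG]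
        exact IH1 r S (by rw [hNr' r hri hrj]; exact hS)
      -- local partition function pieces at j
      set A : ℝ := ∑ S ∈ ((G.neighborFinset j).erase i).powerset, μ j S * ∏ k ∈ S, x k j
        with hAdef
      set B : ℝ := ∑ S ∈ ((G.neighborFinset j).erase i).powerset,
        μ j (insert i S) * ∏ k ∈ S, x k j with hBdef
      have hApos : 0 < A := by
        rw [hAdef]
        have h1 := lZ_pos (A := (G.neighborFinset j).erase i) (ν := μ j) (w := fun k => x k j)
          (fun S hS => hnn j S (Finset.mem_powerset.2
            ((Finset.mem_powerset.1 hS).trans (Finset.erase_subset _ _)))) (h0 j)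
          (fun k => hxnn k j)
        rw [lZ] at h1
        exact h1
      have hxji : x j i * A = t * B := by
        have h1 := hx j i hij.symm
        rw [cavOp] at h1
        rw [← hAdef, ← hBdef] at h1
        have hA0 : A ≠ 0 := hApos.ne'
        rw [h1]
        field_simp
      have hZjAB : lZ (G.neighborFinset j) (μ j) (fun k => x k j) = A + x i j * B := by
        have hiA : i ∉ (G.neighborFinset j).erase i := Finset.notMem_erase _ _
        rw [lZ, show G.neighborFinset j = insert i ((G.neighborFinset j).erase i) from
          (Finset.insert_erase hiNj).symm, sumPI hiA (μ j) (fun k => x k j), hAdef, hBdef,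
          Finset.mul_sum, ← Finset.sum_add_distrib]
        refine Finset.sum_congr rfl fun S hS => ?_
        ring
      have hZjpos : 0 < lZ (G.neighborFinset j) (μ j) (fun k => x k j) :=
        lZ_pos (fun S hS => hnn j S hS) (h0 j) (fun k => hxnn k j)
      -- the edge numerator for the leaf edge
      have hNE : NumE G μ t e * lZ (G.neighborFinset j) (μ j) (fun k => x k j)
          = x i j * B * ZG G μ t := by
        have hstep1 : NumE G μ t e
            = ∑ S ∈ (G.neighborFinset j).powerset.filter (fun S => i ∈ S),
                NumV G μ t j S := by
          have hcong : G.edgeFinset.powerset.filter (fun F => e ∈ F)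
              = G.edgeFinset.powerset.filter (fun F => nbrsIn G F j ∈
                  (G.neighborFinset j).powerset.filter (fun S => i ∈ S)) := by
            refine Finset.filter_congr fun F hF => ?_
            simp only [Finset.mem_filter, Finset.mem_powerset]
            constructor
            · intro heF
              refine ⟨Finset.filter_subset _ _, ?_⟩
              rw [nbrsIn, Finset.mem_filter]
              exact ⟨hiNj, by rw [show s(j, i) = e from Sym2.eq_swap]; exact heF⟩
            · rintro ⟨-, hiF⟩
              rw [nbrsIn, Finset.mem_filter] at hiF
              rw [← show s(j, i) = e from Sym2.eq_swap]
              exact hiF.2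
          rw [NumE, hcong, ← Finset.sum_fiberwise_eq_sum_filter G.edgeFinset.powerset
            ((G.neighborFinset j).powerset.filter (fun S => i ∈ S))
            (fun F => nbrsIn G F j) (fun F => gWeight G μ F * t ^ F.card)]
          exact Finset.sum_congr rfl fun S _ => by rw [NumV]
        have hstep2 : (∑ S ∈ (G.neighborFinset j).powerset.filter (fun S => i ∈ S),
              μ j S * ∏ k ∈ S, x k j) = x i j * B := by
          have hiA : i ∉ (G.neighborFinset j).erase i := Finset.notMem_erase _ _
          rw [show G.neighborFinset j = insert i ((G.neighborFinset j).erase i) from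
            (Finset.insert_erase hiNj).symm,
            sum_filter_mem_insert hiA (fun S => μ j S * ∏ k ∈ S, x k j), hBdef,
            Finset.mul_sum]
          refine Finset.sum_congr rfl fun S hS => ?_
          have hiS : i ∉ S := fun h => hiA ((Finset.mem_powerset.1 hS) h)
          rw [Finset.prod_insert hiS]
          ring
        rw [hstep1, Finset.sum_mul,
          Finset.sum_congr rfl (fun S hS => hIj S
            (Finset.mem_powerset.1 (Finset.mem_filter.1 hS).1)),
          ← Finset.sum_mul, hstep2]
      have hNE2 : NumE G μ t e * (A + x i j * B) = x i j * B * ZG G μ t := by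
        rw [← hZjAB]; exact hNE
      -- the marginal identity at the leaf i
      have hNVe : NumV G μ t i {j} = NumE G μ t e := by
        rw [NumV, NumE]
        refine Finset.sum_congr (Finset.filter_congr fun F hF => ?_) fun F _ => rfl
        constructor
        · intro h
          have hj : j ∈ nbrsIn G F i := by rw [h]; exact Finset.mem_singleton_self j
          rw [nbrsIn, Finset.mem_filter] at hj
          exact hj.2
        · intro h
          ext k
          rw [nbrsIn, Finset.mem_filter, hNi]
          simp only [Finset.mem_singleton]
          constructor
          · exact fun hk => hk.1
          · rintro rfl
            exact ⟨rfl, h⟩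
      have hIi : ∀ S, S ⊆ G.neighborFinset i →
          NumV G μ t i S * lZ (G.neighborFinset i) (μ i) (fun k => x k i)
            = μ i S * (∏ k ∈ S, x k i) * ZG G μ t := by
        intro S hS
        have hZi : lZ (G.neighborFinset i) (μ i) (fun k => x k i)
            = μ i ∅ + μ i {j} * x j i := by
          rw [lZ, hNi, show ({j} : Finset V) = insert j (∅ : Finset V) from by simp,
            sumPI (Finset.notMem_empty j) (μ i) (fun k => x k i), Finset.powerset_empty,
            Finset.sum_singleton, Finset.prod_empty,
            show insert j (∅ : Finset V) = {j} from by simp]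
          ring
        rw [hNi] at hS
        rcases Finset.subset_singleton_iff.1 hS with rfl | rfl
        · have hcon : (G.edgeFinset.powerset.filter (fun F => nbrsIn G F i = ∅))
              = G.edgeFinset.powerset.filter (fun F => ¬ e ∈ F) := by
            refine Finset.filter_congr fun F hF => ?_
            constructor
            · intro h heF
              have hj : j ∈ nbrsIn G F i := by
                rw [nbrsIn, Finset.mem_filter, hNi]
                exact ⟨Finset.mem_singleton_self j, heF⟩
              rw [h] at hj
              exact Finset.notMem_empty _ hj
            · intro h
              ext k
              rw [nbrsIn, Finset.mem_filter, hNi]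
              simp only [Finset.mem_singleton, Finset.notMem_empty, iff_false, not_and]
              rintro rfl
              exact h
          have hcompl : NumE G μ t e + NumV G μ t i ∅ = ZG G μ t := by
            rw [NumE, NumV, ZG, hcon]
            exact Finset.sum_filter_add_sum_filter_not _ _ _
          have hNV : NumV G μ t i ∅ = ZG G μ t - NumE G μ t e := by linarith
          rw [Finset.prod_empty, hZi]
          refine mul_right_cancel₀ hZjpos.ne' ?_
          rw [hNV, hZjAB]
          linear_combination (-(μ i ∅ + μ i {j} * x j i)) * hNE2
            + (ZG G μ t * μ i {j}) * hxji + (ZG G μ t * B) * hx3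
        · rw [Finset.prod_singleton, hZi, hNVe]
          refine mul_right_cancel₀ hZjpos.ne' ?_
          rw [hZjAB]
          linear_combination (μ i ∅ + μ i {j} * x j i) * hNE2
            - (ZG G μ t * B) * hx3 - (ZG G μ t * μ i {j}) * hxji
      refine ⟨fun r S hS => ?_, ?_⟩
      · by_cases hri : r = i
        · rw [hri] at hS ⊢
          exact hIi S hS
        · by_cases hrj : r = j
          · rw [hrj] at hS ⊢
            exact hIj S hS
          · exact hIr r hri hrj S hS
      · intro a b hab
        by_cases hse : s(a, b) = e
        · have hE2 : NumE G μ t e * (t + x j i * x i j) = x j i * x i j * ZG G μ t := by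
            refine mul_right_cancel₀ hZjpos.ne' ?_
            rw [hZjAB]
            linear_combination (t + x j i * x i j) * hNE2 - (ZG G μ t * x i j) * hxji
          rw [hedef] at hE2
          rw [hedef, Sym2.eq_iff] at hse
          rcases hse with ⟨ha, hb⟩ | ⟨ha, hb⟩
          · rw [ha, hb]
            exact hE2
          · rw [ha, hb, show s(j, i) = s(i, j) from Sym2.eq_swap]
            linear_combination hE2
        · have hab' : G'.Adj a b := (hAdj' a b).2 ⟨hab, hse⟩
          have htrans : NumE G μ t s(a, b) = NumE G' ν t s(a, b) := by
            rw [NumE, NumE, Finset.sum_filter, Finset.sum_filter, hZsplit]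
            refine Finset.sum_congr rfl fun F hF => ?_
            by_cases hc : s(a, b) ∈ F
            · rw [if_pos hc, if_pos (Finset.mem_insert_of_mem hc), if_pos hc]
              exact hw F hF
            · rw [if_neg hc, if_neg (fun h => (Finset.mem_insert.1 h).elim hse hc),
                if_neg hc, add_zero]
          rw [htrans, hZG]
          exact IH2 a b hab'
end MainInd
/-- on a finite acyclic network, the energy can be computed locally from the
solution of the cavity equation:
`U(G;t) = ½ Σ_i U_{μ_i}(x_{j→i}(t) : j∈∂i) = Σ_{ij∈E} x_{j→i}x_{i→j}/(t + x_{j→i}x_{i→j})`. -/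
theorem stmt8 {V : Type*} [Fintype V] [DecidableEq V] (G : SimpleGraph V)
    [DecidableRel G.Adj] (hac : G.IsAcyclic) (μ : V → Finset V → ℝ)
    (hnn : ∀ i : V, ∀ S ∈ (G.neighborFinset i).powerset, 0 ≤ μ i S)
    (h0 : ∀ i : V, 0 < μ i ∅) (t : ℝ) (ht : 0 < t)
    (x : V → V → ℝ) (hxnn : ∀ i j, 0 ≤ x i j)
    (hx : ∀ i j, G.Adj i j → x i j = t * cavOp G μ x i j) :
    UG G μ t = (1 / 2) * ∑ i : V, lEnergy (G.neighborFinset i) (μ i) (fun j => x j i) ∧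
    UG G μ t = ∑ e ∈ G.edgeFinset,
      Sym2.lift ⟨fun i j => x j i * x i j / (t + x j i * x i j), by intros; ring_nf⟩ e := by
  classical
  obtain ⟨M1, M2⟩ := main_ind (G.edgeFinset.card) G le_rfl hac μ hnn h0 t ht x hxnn hx
  have hZpos : 0 < ZG G μ t := ZG_pos G hnn h0 ht
  have hD : ∀ r : V, lEnergy (G.neighborFinset r) (μ r) (fun k => x k r)
      = (∑ F ∈ G.edgeFinset.powerset,
          ((nbrsIn G F r).card : ℝ) * (gWeight G μ F * t ^ F.card)) / ZG G μ t := by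
    intro r
    have hZr : 0 < lZ (G.neighborFinset r) (μ r) (fun k => x k r) :=
      lZ_pos (fun S hS => hnn r S hS) (h0 r) (fun k => hxnn k r)
    rw [lEnergy, div_eq_div_iff hZr.ne' hZpos.ne']
    have hfib : (∑ S ∈ (G.neighborFinset r).powerset, ((S.card : ℝ)) * NumV G μ t r S)
        = ∑ F ∈ G.edgeFinset.powerset,
            ((nbrsIn G F r).card : ℝ) * (gWeight G μ F * t ^ F.card) := by
      rw [← Finset.sum_fiberwise_of_maps_to (g := fun F => nbrsIn G F r)
        (t := (G.neighborFinset r).powerset)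
        (fun F _ => Finset.mem_powerset.2 (Finset.filter_subset _ _))
        (fun F => ((nbrsIn G F r).card : ℝ) * (gWeight G μ F * t ^ F.card))]
      refine Finset.sum_congr rfl fun S hS => ?_
      rw [NumV, Finset.mul_sum]
      refine Finset.sum_congr rfl fun F hF => ?_
      rw [(Finset.mem_filter.1 hF).2]
    calc (∑ S ∈ (G.neighborFinset r).powerset, (S.card : ℝ) * μ r S * ∏ k ∈ S, x k r)
          * ZG G μ t
        = ∑ S ∈ (G.neighborFinset r).powerset, (S.card : ℝ) *
            (μ r S * (∏ k ∈ S, x k r) * ZG G μ t) := by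
          rw [Finset.sum_mul]
          exact Finset.sum_congr rfl fun S _ => by ring
      _ = ∑ S ∈ (G.neighborFinset r).powerset, (S.card : ℝ) *
            (NumV G μ t r S * lZ (G.neighborFinset r) (μ r) (fun k => x k r)) := by
          refine Finset.sum_congr rfl fun S hS => ?_
          rw [M1 r S (Finset.mem_powerset.1 hS)]
      _ = (∑ S ∈ (G.neighborFinset r).powerset, (S.card : ℝ) * NumV G μ t r S) *
            lZ (G.neighborFinset r) (μ r) (fun k => x k r) := by
          rw [Finset.sum_mul]
          exact Finset.sum_congr rfl fun S _ => by ring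
      _ = _ := by rw [hfib]
  constructor
  · have hsum : ∑ r : V, lEnergy (G.neighborFinset r) (μ r) (fun k => x k r)
        = (∑ F ∈ G.edgeFinset.powerset,
            2 * (F.card : ℝ) * (gWeight G μ F * t ^ F.card)) / ZG G μ t := by
      rw [Finset.sum_congr rfl fun r (_ : r ∈ Finset.univ) => hD r, ← Finset.sum_div]
      congr 1
      rw [Finset.sum_comm]
      refine Finset.sum_congr rfl fun F hF => ?_
      rw [← Finset.sum_mul, ← Nat.cast_sum, handshake G (Finset.mem_powerset.1 hF)]
      push_cast
      ring
    rw [UG, hsum, ← mul_div_assoc]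
    congr 1
    rw [Finset.mul_sum]
    refine Finset.sum_congr rfl fun F _ => ?_
    ring
  · have hcard : ∀ F ∈ G.edgeFinset.powerset, ((F.card : ℝ))
        = ∑ e ∈ G.edgeFinset, (if e ∈ F then (1 : ℝ) else 0) := by
      intro F hF
      rw [Finset.sum_boole, Finset.filter_mem_eq_inter,
        Finset.inter_eq_right.2 (Finset.mem_powerset.1 hF)]
    have hswap : (∑ F ∈ G.edgeFinset.powerset, (F.card : ℝ) * gWeight G μ F * t ^ F.card)
        = ∑ e ∈ G.edgeFinset, NumE G μ t e := by
      calc ∑ F ∈ G.edgeFinset.powerset, (F.card : ℝ) * gWeight G μ F * t ^ F.card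
          = ∑ F ∈ G.edgeFinset.powerset, ∑ e ∈ G.edgeFinset,
              (if e ∈ F then gWeight G μ F * t ^ F.card else 0) := by
            refine Finset.sum_congr rfl fun F hF => ?_
            rw [mul_assoc, hcard F hF, Finset.sum_mul]
            refine Finset.sum_congr rfl fun e _ => ?_
            by_cases hc : e ∈ F
            · rw [if_pos hc, if_pos hc, one_mul]
            · rw [if_neg hc, if_neg hc, zero_mul]
        _ = ∑ e ∈ G.edgeFinset, ∑ F ∈ G.edgeFinset.powerset,
              (if e ∈ F then gWeight G μ F * t ^ F.card else 0) := Finset.sum_comm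
        _ = ∑ e ∈ G.edgeFinset, NumE G μ t e := Finset.sum_congr rfl fun e _ => by
              rw [NumE, Finset.sum_filter]
    rw [UG, hswap, Finset.sum_div]
    refine Finset.sum_congr rfl fun e he => ?_
    revert he
    induction e using Sym2.ind with
    | _ a b =>
      intro he
      rw [Sym2.lift_mk]
      have hab : G.Adj a b := SimpleGraph.mem_edgeFinset.1 he
      have hp : 0 ≤ x b a * x a b := mul_nonneg (hxnn b a) (hxnn a b)
      have htp : 0 < t + x b a * x a b := by linarith
      rw [div_eq_div_iff hZpos.ne' htp.ne']
      exact M2 a b hab
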